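/- arXiv:2212.05323 — 2 statements merged into one kernel-verified Lean document; each statement's English description precedes it below -/
import Mathlib

section
/- For every natural number p, one has h(m_p)^40 < m_p^19, where m_p = 1287 · 429^(12p+1); in particular h(m_p) < m_p^(19/40) for all p, and the ratio h(m_p)/m_p^(19/40) tends to 0 as p → ∞, i.e. h(m_p) ∈ o(m_p^(19/40)). -/
open Filter

/-- `hpp m` is the largest prime power dividing `m`:
the maximum over primes `p` dividing `m` of `p ^ (ν_p m)`, with the convention `hpp 1 = 1`. -/
def hpp (m : ℕ) : ℕ := max 1 (m.primeFactors.sup fun p => p ^ m.factorization p)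

/-- The degrees `m_p = 1287·429^(12p+1)`. -/
def mp (p : ℕ) : ℕ := 1287 * 429 ^ (12 * p + 1)

lemma mp_eq (p : ℕ) : mp p = 3^(12*p+3) * 11^(12*p+2) * 13^(12*p+2) := by
  unfold mp
  have : (429:ℕ)^(12*p+1) = 3^(12*p+1)*11^(12*p+1)*13^(12*p+1) := by
    rw [← mul_pow, ← mul_pow]; norm_num
  rw [this]; ring

lemma hpp_eq (a b : ℕ) (ha : a ≠ 0) (hb : b ≠ 0) (h3 : 3^a ≤ 13^b) :
    hpp (3^a * 11^b * 13^b) = 13^b := by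
  have p3 : Nat.Prime 3 := by norm_num
  have p11 : Nat.Prime 11 := by norm_num
  have p13 : Nat.Prime 13 := by norm_num
  have h30 : (3:ℕ)^a ≠ 0 := by positivity
  have h110 : (11:ℕ)^b ≠ 0 := by positivity
  have h130 : (13:ℕ)^b ≠ 0 := by positivity
  have hpf : (3^a * 11^b * 13^b).primeFactors = {3, 11, 13} := by
    rw [Nat.primeFactors_mul (by positivity) h130, Nat.primeFactors_mul h30 h110,
      Nat.primeFactors_pow _ ha, Nat.primeFactors_pow _ hb, Nat.primeFactors_pow _ hb,
      p3.primeFactors, p11.primeFactors, p13.primeFactors]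
    rfl
  have hfac : (3^a * 11^b * 13^b).factorization
      = Finsupp.single 3 a + Finsupp.single 11 b + Finsupp.single 13 b := by
    rw [Nat.factorization_mul (by positivity) h130, Nat.factorization_mul h30 h110,
      p3.factorization_pow, p11.factorization_pow, p13.factorization_pow]
  unfold hpp
  rw [hpf, hfac]
  rw [show ({3, 11, 13} : Finset ℕ) = insert 3 (insert 11 {13}) from rfl]
  rw [Finset.sup_insert, Finset.sup_insert, Finset.sup_singleton]
  simp only [Finsupp.add_apply, Finsupp.single_apply]
  norm_num
  have h11 : (11:ℕ)^b ≤ 13^b := Nat.pow_le_pow_left (by norm_num) b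
  rw [max_eq_right h11, max_eq_right h3, max_eq_right (Nat.one_le_iff_ne_zero.mpr h130)]

lemma three_le (p : ℕ) : (3:ℕ)^(12*p+3) ≤ 13^(12*p+2) :=
  calc (3:ℕ)^(12*p+3) = 3^(12*p)*3^3 := by rw [pow_add]
    _ ≤ 13^(12*p)*13^2 := Nat.mul_le_mul (Nat.pow_le_pow_left (by norm_num) _) (by norm_num)
    _ = 13^(12*p+2) := by rw [pow_add]

lemma hpp_mp (p : ℕ) : hpp (mp p) = 13^(12*p+2) := by
  rw [mp_eq]
  exact hpp_eq _ _ (by omega) (by omega) (three_le p)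

lemma key (p : ℕ) : (13^(12*p+2) * 2^p : ℕ)^40 < (mp p)^19 := by
  rw [mp_eq]
  have e1 : (13^(12*p+2) * 2^p : ℕ)^40
      = 13^(228*p+38) * (((13:ℕ)^252*2^40)^p * 13^42) := by
    simp only [mul_pow, ← pow_mul]; ring
  have e2 : (3^(12*p+3) * 11^(12*p+2) * 13^(12*p+2) : ℕ)^19
      = 13^(228*p+38) * (((33:ℕ)^228)^p * (3^57*11^38)) := by
    have : (33:ℕ) = 3 * 11 := by norm_num
    rw [this]; simp only [mul_pow, ← pow_mul]; ring
  rw [e1, e2]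
  have inner : ((13:ℕ)^252*2^40)^p * 13^42 < ((33:ℕ)^228)^p * (3^57*11^38) :=
    Nat.mul_lt_mul_of_le_of_lt (Nat.pow_le_pow_left (by norm_num) p) (by norm_num)
      (by positivity)
  exact Nat.mul_lt_mul_of_le_of_lt (le_refl _) inner (by positivity)

lemma real_bound (p : ℕ) :
    ((13:ℝ)^(12*p+2) * 2^p) ≤ (mp p : ℝ) ^ ((19:ℝ)/40) := by
  have hmp : (0:ℝ) ≤ (mp p : ℝ) := Nat.cast_nonneg _
  have hrw : ((mp p:ℝ)^((19:ℝ)/40))^(40:ℕ) = (mp p:ℝ)^(19:ℕ) := by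
    rw [← Real.rpow_natCast ((mp p:ℝ)^((19:ℝ)/40)) 40, ← Real.rpow_mul hmp,
      ← Real.rpow_natCast (mp p : ℝ) 19]
    norm_num
  refine le_of_pow_le_pow_left₀ (n := 40) (by norm_num) (Real.rpow_nonneg hmp _) ?_
  rw [hrw]
  have := key p
  have hcast : ((13^(12*p+2) * 2^p : ℕ) : ℝ)^40 < ((mp p : ℕ) : ℝ)^19 := by
    exact_mod_cast this
  push_cast at hcast
  exact le_of_lt hcast

/-- `h(m_p)^40 < m_p^19` for all `p`; in particular `h(m_p) < m_p^(19/40)`,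
and `h(m_p)/m_p^(19/40) → 0` as `p → ∞`, i.e. `h(m_p) ∈ o(m_p^(19/40))`. -/
theorem hpp_mp_littleO :
    (∀ p : ℕ, (hpp (mp p)) ^ 40 < (mp p) ^ 19) ∧
      (∀ p : ℕ, (hpp (mp p) : ℝ) < (mp p : ℝ) ^ ((19 : ℝ) / 40)) ∧
      Tendsto (fun p : ℕ => (hpp (mp p) : ℝ) / (mp p : ℝ) ^ ((19 : ℝ) / 40))
        atTop (nhds 0) := by
  have h1 : ∀ p : ℕ, (hpp (mp p)) ^ 40 < (mp p) ^ 19 := by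
    intro p
    calc (hpp (mp p))^40 ≤ (13^(12*p+2) * 2^p : ℕ)^40 := by
          rw [hpp_mp p]
          exact Nat.pow_le_pow_left (Nat.le_mul_of_pos_right _ (by positivity)) _
      _ < (mp p)^19 := key p
  refine ⟨h1, ?_, ?_⟩
  · intro p
    have hmp : (0:ℝ) ≤ (mp p : ℝ) := Nat.cast_nonneg _
    refine lt_of_pow_lt_pow_left₀ 40 (Real.rpow_nonneg hmp _) ?_
    have hrw : ((mp p:ℝ)^((19:ℝ)/40))^(40:ℕ) = (mp p:ℝ)^(19:ℕ) := by
      rw [← Real.rpow_natCast ((mp p:ℝ)^((19:ℝ)/40)) 40, ← Real.rpow_mul hmp,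
        ← Real.rpow_natCast (mp p : ℝ) 19]
      norm_num
    rw [hrw]
    exact_mod_cast h1 p
  · have hb : ∀ p : ℕ, (hpp (mp p) : ℝ) / (mp p : ℝ) ^ ((19:ℝ)/40) ≤ (1/2:ℝ)^p := by
      intro p
      have hpos : (0:ℝ) < (13:ℝ)^(12*p+2) * 2^p := by positivity
      have hle : (hpp (mp p) : ℝ) / (mp p : ℝ) ^ ((19:ℝ)/40)
          ≤ (hpp (mp p) : ℝ) / ((13:ℝ)^(12*p+2) * 2^p) :=
        div_le_div_of_nonneg_left (Nat.cast_nonneg _) hpos (real_bound p)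
      refine hle.trans ?_
      rw [hpp_mp p]
      push_cast
      rw [← div_div, div_self (by positivity), one_div, one_div, inv_pow]
    refine squeeze_zero (fun p => by positivity) hb ?_
    exact tendsto_pow_atTop_nhds_zero_of_lt_one (by norm_num) (by norm_num)
end

section
/- There exist infinitely many odd positive integers m such that neither m nor m + 2 is a prime power and S(m) < VZ(m). -/
/-- The Viro–Zvonilov bound. -/
def VZ (m : ℕ) : ℚ :=
  ((m : ℚ) - 3) ^ 2 / 4 + ((m : ℚ) ^ 2 - (hpp m : ℚ) ^ 2) / (4 * (hpp m : ℚ) ^ 2)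

/-- The bound of the paper's main theorem. -/
def S (m : ℕ) : ℚ := ((m : ℚ) - 1) ^ 2 / 4

lemma not_isPrimePow_of_two_primes {n p q : ℕ} (hp : p.Prime) (hq : q.Prime)
    (hne : p ≠ q) (hpd : p ∣ n) (hqd : q ∣ n) : ¬ IsPrimePow n := by
  rintro ⟨r, k, hr, hk, rfl⟩
  have hr' : r.Prime := Nat.prime_iff.mpr hr
  have h1 : p = r := (Nat.prime_dvd_prime_iff_eq hp hr').mp (hp.dvd_of_dvd_pow hpd)
  have h2 : q = r := (Nat.prime_dvd_prime_iff_eq hq hr').mp (hq.dvd_of_dvd_pow hqd)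
  exact hne (h1.trans h2.symm)

lemma hpp_ub {a b c B : ℕ} (h1 : 1 ≤ B) (h3 : 3^a ≤ B) (h5 : 5^b ≤ B) (h7 : 7^c ≤ B) :
    hpp (3^a * 5^b * 7^c) ≤ B := by
  unfold hpp
  apply max_le h1
  apply Finset.sup_le
  intro p hp
  have hpr : p.Prime := Nat.prime_of_mem_primeFactors hp
  have hdvd : p ∣ 3^a * 5^b * 7^c := Nat.dvd_of_mem_primeFactors hp
  set j := (3^a * 5^b * 7^c).factorization p with hj
  have hqd : p ^ j ∣ 3^a * 5^b * 7^c := Nat.ordProj_dvd _ _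
  have hcases : p = 3 ∨ p = 5 ∨ p = 7 := by
    rcases (hpr.dvd_mul.mp hdvd) with h | h
    · rcases (hpr.dvd_mul.mp h) with h' | h'
      · exact Or.inl ((Nat.prime_dvd_prime_iff_eq hpr (by norm_num)).mp (hpr.dvd_of_dvd_pow h'))
      · exact Or.inr (Or.inl ((Nat.prime_dvd_prime_iff_eq hpr (by norm_num)).mp
          (hpr.dvd_of_dvd_pow h')))
    · exact Or.inr (Or.inr ((Nat.prime_dvd_prime_iff_eq hpr (by norm_num)).mp
        (hpr.dvd_of_dvd_pow h)))
  rcases hcases with rfl | rfl | rfl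
  · have hcop : Nat.Coprime (3 ^ j) (5^b * 7^c) :=
      Nat.Coprime.pow_left _ (Nat.Coprime.mul_right
        (Nat.Coprime.pow_right _ (by norm_num)) (Nat.Coprime.pow_right _ (by norm_num)))
    have : (3:ℕ) ^ j ∣ 3 ^ a := by
      have h' : (3:ℕ) ^ j ∣ 3 ^ a * (5^b * 7^c) := by rwa [← mul_assoc]
      exact (Nat.Coprime.dvd_of_dvd_mul_right hcop h')
    exact le_trans (Nat.le_of_dvd (by positivity) this) h3
  · have hcop : Nat.Coprime (5 ^ j) (3^a * 7^c) :=
      Nat.Coprime.pow_left _ (Nat.Coprime.mul_right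
        (Nat.Coprime.pow_right _ (by norm_num)) (Nat.Coprime.pow_right _ (by norm_num)))
    have : (5:ℕ) ^ j ∣ 5 ^ b := by
      have h' : (5:ℕ) ^ j ∣ 5 ^ b * (3^a * 7^c) := by
        have e : 3^a * 5^b * 7^c = 5 ^ b * (3^a * 7^c) := by ring
        rwa [e] at hqd
      exact (Nat.Coprime.dvd_of_dvd_mul_right hcop h')
    exact le_trans (Nat.le_of_dvd (by positivity) this) h5
  · have hcop : Nat.Coprime (7 ^ j) (3^a * 5^b) :=
      Nat.Coprime.pow_left _ (Nat.Coprime.mul_right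
        (Nat.Coprime.pow_right _ (by norm_num)) (Nat.Coprime.pow_right _ (by norm_num)))
    have : (7:ℕ) ^ j ∣ 7 ^ c := by
      have h' : (7:ℕ) ^ j ∣ 7 ^ c * (3^a * 5^b) := by
        have e : 3^a * 5^b * 7^c = 7 ^ c * (3^a * 5^b) := by ring
        rwa [e] at hqd
      exact (Nat.Coprime.dvd_of_dvd_mul_right hcop h')
    exact le_trans (Nat.le_of_dvd (by positivity) this) h7

lemma le_aux : ∀ k : ℕ, 4 * 7 ^ (20 + 10 * k) ≤ 3 ^ (15 + 10 * k) * 5 ^ (17 + 10 * k) := by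
  intro k
  induction k with
  | zero => norm_num
  | succ k ih =>
    have e1 : 4 * 7 ^ (20 + 10 * (k + 1)) = (4 * 7 ^ (20 + 10 * k)) * 7 ^ 10 := by ring
    have e2 : 3 ^ (15 + 10 * (k + 1)) * 5 ^ (17 + 10 * (k + 1))
        = (3 ^ (15 + 10 * k) * 5 ^ (17 + 10 * k)) * (3 ^ 10 * 5 ^ 10) := by ring
    rw [e1, e2]
    exact Nat.mul_le_mul ih (by norm_num)

/-- There are infinitely many odd positive integers `m` such that neither `m` nor `m + 2`
is a prime power and `S m < VZ m`. -/
theorem infinite_odd_S_lt_VZ :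
    {m : ℕ | Odd m ∧ 0 < m ∧ ¬ IsPrimePow m ∧ ¬ IsPrimePow (m + 2) ∧ S m < VZ m}.Infinite := by
  apply Set.infinite_of_injective_forall_mem
    (f := fun k : ℕ => 3 ^ (15 + 10 * k) * 5 ^ (17 + 10 * k) * 7 ^ (14 + 10 * k))
  case hi =>
    apply StrictMono.injective
    apply strictMono_nat_of_lt_succ
    intro k
    have e : 3 ^ (15 + 10 * (k + 1)) * 5 ^ (17 + 10 * (k + 1)) * 7 ^ (14 + 10 * (k + 1))
        = (3 ^ (15 + 10 * k) * 5 ^ (17 + 10 * k) * 7 ^ (14 + 10 * k))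
          * (3 ^ 10 * 5 ^ 10 * 7 ^ 10) := by ring
    show 3 ^ (15 + 10 * k) * 5 ^ (17 + 10 * k) * 7 ^ (14 + 10 * k)
        < 3 ^ (15 + 10 * (k + 1)) * 5 ^ (17 + 10 * (k + 1)) * 7 ^ (14 + 10 * (k + 1))
    rw [e]
    have h0 : 0 < 3 ^ (15 + 10 * k) * 5 ^ (17 + 10 * k) * 7 ^ (14 + 10 * k) := by positivity
    exact lt_mul_of_one_lt_right h0 (by norm_num)
  case hf =>
    intro k
    set m : ℕ := 3 ^ (15 + 10 * k) * 5 ^ (17 + 10 * k) * 7 ^ (14 + 10 * k) with hm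
    have hmpos : 0 < m := by positivity
    have hodd : Odd m := by
      refine Odd.mul (Odd.mul ?_ ?_) ?_ <;> exact Odd.pow (by decide)
    have h3dvd : 3 ∣ m := by
      rw [hm]; exact Dvd.dvd.mul_right (Dvd.dvd.mul_right (dvd_pow_self 3 (by omega)) _) _
    have h5dvd : 5 ∣ m := by
      rw [hm]; exact Dvd.dvd.mul_right (Dvd.dvd.mul_left (dvd_pow_self 5 (by omega)) _) _
    have hmod : m ≡ 141 [MOD 143] := by
      have e2 : (((3 * 5 * 7 : ℕ)) ^ 10) ^ k = 3 ^ (10 * k) * 5 ^ (10 * k) * 7 ^ (10 * k) := by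
        rw [mul_pow, mul_pow, mul_pow, mul_pow, ← pow_mul, ← pow_mul, ← pow_mul]
      have e : m = (3 ^ 15 * 5 ^ 17 * 7 ^ 14) * ((3 * 5 * 7) ^ 10) ^ k := by
        rw [hm, e2]; ring
      calc m = (3 ^ 15 * 5 ^ 17 * 7 ^ 14) * ((3 * 5 * 7) ^ 10) ^ k := e
      _ ≡ (3 ^ 15 * 5 ^ 17 * 7 ^ 14) * 1 ^ k [MOD 143] :=
          Nat.ModEq.mul (Nat.ModEq.refl _) (Nat.ModEq.pow k (by decide))
      _ = 3 ^ 15 * 5 ^ 17 * 7 ^ 14 := by ring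
      _ ≡ 141 [MOD 143] := by decide
    have h143 : 143 ∣ m + 2 := by
      have h0 : m + 2 ≡ 0 [MOD 143] := (Nat.ModEq.add_right 2 hmod).trans (by decide)
      exact (Nat.modEq_zero_iff_dvd).mp h0
    have h11 : (11 : ℕ) ∣ m + 2 := dvd_trans (by norm_num) h143
    have h13 : (13 : ℕ) ∣ m + 2 := dvd_trans (by norm_num) h143
    refine ⟨hodd, hmpos, ?_, ?_, ?_⟩
    · exact not_isPrimePow_of_two_primes (by norm_num) (by norm_num) (by norm_num) h3dvd h5dvd
    · exact not_isPrimePow_of_two_primes (p := 11) (q := 13) (by norm_num) (by norm_num)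
        (by norm_num) h11 h13
    · set B : ℕ := 7 ^ (17 + 10 * k) with hB
      have hBub : hpp m ≤ B := by
        rw [hm]
        apply hpp_ub
        · exact Nat.one_le_pow _ _ (by norm_num)
        · calc (3:ℕ) ^ (15 + 10 * k) ≤ 7 ^ (15 + 10 * k) :=
                Nat.pow_le_pow_left (by norm_num) _
            _ ≤ 7 ^ (17 + 10 * k) := Nat.pow_le_pow_right (by norm_num) (by omega)
        · exact Nat.pow_le_pow_left (by norm_num) _
        · exact Nat.pow_le_pow_right (by norm_num) (by omega)
      have hhpp1 : 1 ≤ hpp m := le_max_left _ _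
      have hkey : 4 * B ^ 2 ≤ m := by
        have e : 4 * B ^ 2 = (4 * 7 ^ (20 + 10 * k)) * 7 ^ (14 + 10 * k) := by rw [hB]; ring
        rw [e, hm]
        exact Nat.mul_le_mul_right _ (le_aux k)
      have hm7 : 7 ≤ m := by
        calc 7 ≤ 7 ^ (14 + 10 * k) := Nat.le_self_pow (by omega) 7
          _ ≤ m := by rw [hm]; exact Nat.le_mul_of_pos_left _ (by positivity)
      have hq1 : (1 : ℚ) ≤ (hpp m : ℚ) := by exact_mod_cast hhpp1
      have hqB : ((hpp m : ℚ)) ≤ (B : ℚ) := by exact_mod_cast hBub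
      have hqkey : 4 * (B : ℚ) ^ 2 ≤ (m : ℚ) := by exact_mod_cast hkey
      have hqm7 : (7 : ℚ) ≤ (m : ℚ) := by exact_mod_cast hm7
      have hqB1 : (1 : ℚ) ≤ (B : ℚ) := le_trans hq1 hqB
      have hm0 : (0 : ℚ) ≤ (m : ℚ) := by linarith
      have hBB : (hpp m : ℚ) ^ 2 ≤ (B : ℚ) ^ 2 := by nlinarith
      have h4m : (0 : ℚ) ≤ 4 * (m : ℚ) - 7 := by linarith
      have step1 : (hpp m : ℚ) ^ 2 * (4 * (m : ℚ) - 7) ≤ (B : ℚ) ^ 2 * (4 * (m : ℚ) - 7) :=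
        mul_le_mul_of_nonneg_right hBB h4m
      have step2 : 4 * (B : ℚ) ^ 2 * (m : ℚ) ≤ (m : ℚ) * (m : ℚ) := by
        nlinarith [mul_le_mul_of_nonneg_right hqkey hm0]
      have hB2 : (1 : ℚ) ≤ (B : ℚ) ^ 2 := by nlinarith
      have key : (hpp m : ℚ) ^ 2 * (4 * (m : ℚ) - 7) < (m : ℚ) ^ 2 := by
        nlinarith [step1, step2, hB2]
      have hpos : (0 : ℚ) < (hpp m : ℚ) := by linarith
      rw [S, VZ]
      rw [div_add_div _ _ (by norm_num) (by positivity),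
        div_lt_div_iff₀ (by norm_num) (by positivity)]
      nlinarith [key, sq_nonneg ((hpp m : ℚ)), hpos]
end
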